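/- For real numbers 0 < α < β and t ∈ (0, π/β), the function g(t) = sin(αt)/sin(βt) is monotone increasing on (0, π/β). -/

import Mathlib

open Real

theorem stmt_0 (α β : ℝ) (hα : 0 < α) (hαβ : α < β) :
    MonotoneOn (fun t : ℝ => Real.sin (α * t) / Real.sin (β * t))
      (Set.Ioo 0 (Real.pi / β)) := by
  have hβ : 0 < β := hα.trans hαβ
  have hπβ : 0 < Real.pi / β := div_pos Real.pi_pos hβ
  have hsinβ : ∀ t ∈ Set.Ioo (0:ℝ) (Real.pi / β), 0 < Real.sin (β * t) := by
    rintro t ⟨ht0, ht1⟩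
    apply Real.sin_pos_of_pos_of_lt_pi (by positivity)
    calc β * t < β * (Real.pi / β) := by nlinarith
      _ = Real.pi := by field_simp
  have hsinα : ∀ t ∈ Set.Ioo (0:ℝ) (Real.pi / β), 0 < Real.sin (α * t) := by
    rintro t ⟨ht0, ht1⟩
    apply Real.sin_pos_of_pos_of_lt_pi (by positivity)
    calc α * t < β * t := by nlinarith
      _ < β * (Real.pi / β) := by nlinarith
      _ = Real.pi := by field_simp
  -- elementary derivatives
  have hidα : ∀ t : ℝ, HasDerivAt (fun x : ℝ => α * x) α t := fun t => by
    simpa using (hasDerivAt_id t).const_mul α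
  have hidβ : ∀ t : ℝ, HasDerivAt (fun x : ℝ => β * x) β t := fun t => by
    simpa using (hasDerivAt_id t).const_mul β
  have hs1 : ∀ t : ℝ, HasDerivAt (fun x => Real.sin (α * x)) (Real.cos (α*t) * α) t :=
    fun t => (Real.hasDerivAt_sin (α*t)).comp t (hidα t)
  have hs2 : ∀ t : ℝ, HasDerivAt (fun x => Real.sin (β * x)) (Real.cos (β*t) * β) t :=
    fun t => (Real.hasDerivAt_sin (β*t)).comp t (hidβ t)
  have hc1 : ∀ t : ℝ, HasDerivAt (fun x => Real.cos (α * x)) (-Real.sin (α*t) * α) t :=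
    fun t => (Real.hasDerivAt_cos (α*t)).comp t (hidα t)
  have hc2 : ∀ t : ℝ, HasDerivAt (fun x => Real.cos (β * x)) (-Real.sin (β*t) * β) t :=
    fun t => (Real.hasDerivAt_cos (β*t)).comp t (hidβ t)
  -- the numerator of the derivative of the quotient
  set h : ℝ → ℝ := fun t => Real.cos (α * t) * α * Real.sin (β * t)
      - Real.sin (α * t) * (Real.cos (β * t) * β) with hh
  have hd : ∀ t : ℝ, HasDerivAt h
      ((β^2 - α^2) * (Real.sin (α*t) * Real.sin (β*t))) t := by
    intro t
    have := (((hc1 t).mul_const α).mul (hs2 t)).sub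
      ((hs1 t).mul ((hc2 t).mul_const β))
    refine this.congr_deriv ?_
    ring
  have hmono : StrictMonoOn h (Set.Icc 0 (Real.pi / β)) := by
    apply strictMonoOn_of_deriv_pos (convex_Icc _ _)
    · exact Continuous.continuousOn (by fun_prop)
    · intro t ht
      rw [interior_Icc] at ht
      rw [(hd t).deriv]
      have h1 := hsinα t ht
      have h2 := hsinβ t ht
      have : 0 < β^2 - α^2 := by nlinarith
      exact mul_pos this (mul_pos h1 h2)
  have hnum : ∀ t ∈ Set.Ioo (0:ℝ) (Real.pi / β), 0 < h t := by
    intro t ht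
    have h0 : h 0 = 0 := by simp [hh]
    have := hmono (Set.left_mem_Icc.2 hπβ.le)
      ⟨ht.1.le, ht.2.le⟩ ht.1
    linarith [this]
  -- conclude
  apply StrictMonoOn.monotoneOn
  apply strictMonoOn_of_deriv_pos (convex_Ioo _ _)
  · apply ContinuousOn.div (Continuous.continuousOn (by fun_prop))
      (Continuous.continuousOn (by fun_prop))
    exact fun t ht => (hsinβ t ht).ne'
  · intro t ht
    rw [interior_Ioo] at ht
    have hder : HasDerivAt (fun t : ℝ => Real.sin (α * t) / Real.sin (β * t))
        (h t / (Real.sin (β * t))^2) t :=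
      (hs1 t).div (hs2 t) (hsinβ t ht).ne'
    rw [hder.deriv]
    exact div_pos (hnum t ht) (pow_pos (hsinβ t ht) 2)
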